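/- Let H ∈ ℂ^{n×n} be Hermitian, Φ ∈ ℂ^{n×p} with Φ*Φ = I_p and HΦ = Φ·Λ where Λ := Φ*HΦ has eigenvalues λ₁ ≤ … ≤ λ_p equal to the p smallest eigenvalues of H (Aufbau principle). Then for every ξ ∈ ℂ^{n×p} with Φ*ξ = 0, one has Re(tr(ξ*(Hξ − ξΛ))) ≥ (λ_{p+1} − λ_p)·‖ξ‖_F², where λ_{p+1} is the (p+1)-st smallest eigenvalue of H. -/

import Mathlib

open Matrix


private lemma trace_conjT_mul {α β : Type*} [Fintype α] [Fintype β]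
    (M N : Matrix α β ℂ) :
    (Mᴴ * N).trace = ∑ k, ∑ i, star (M i k) * N i k := by
  simp [Matrix.trace, Matrix.diag, Matrix.mul_apply, Matrix.conjTranspose_apply]

private lemma term_id (c : ℝ) (z : ℂ) :
    star z * ((c : ℂ) * z) = ((c * Complex.normSq z : ℝ) : ℂ) := by
  rw [Complex.ofReal_mul, Complex.normSq_eq_conj_mul_self]
  simp only [Complex.star_def]
  ring

private lemma term_id' (c : ℝ) (z : ℂ) :
    star z * (z * (c : ℂ)) = ((c * Complex.normSq z : ℝ) : ℂ) := by
  rw [mul_comm z]; exact term_id c z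

theorem horizontal_coercivity_gap {n p : ℕ} (hp : 0 < p) (hpn : p < n)
    (H : Matrix (Fin n) (Fin n) ℂ) (hH : Hᴴ = H)
    (Φ : Matrix (Fin n) (Fin p) ℂ) (hΦ : Φᴴ * Φ = 1)
    (μ : Fin n → ℝ) (hmono : Monotone μ)
    (U : Matrix (Fin n) (Fin n) ℂ) (hU : Uᴴ * U = 1) (hUU : U * Uᴴ = 1)
    (hdiag : H = U * Matrix.diagonal (fun i => (μ i : ℂ)) * Uᴴ)
    (heig : H * Φ = Φ * (Φᴴ * H * Φ))
    (W : Matrix (Fin p) (Fin p) ℂ) (hW : Wᴴ * W = 1) (hWW : W * Wᴴ = 1)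
    (hAufbau : Φᴴ * H * Φ
      = W * Matrix.diagonal (fun i : Fin p => (μ (Fin.castLE hpn.le i) : ℂ)) * Wᴴ)
    (ξ : Matrix (Fin n) (Fin p) ℂ) (hξ : Φᴴ * ξ = 0) :
    (μ ⟨p, hpn⟩ - μ ⟨p - 1, Nat.lt_of_lt_of_le (Nat.sub_lt hp one_pos) hpn.le⟩)
        * ((ξᴴ * ξ).trace).re
      ≤ ((ξᴴ * (H * ξ - ξ * (Φᴴ * H * Φ))).trace).re := by
  classical
  set t : ℝ := μ ⟨p, hpn⟩ with ht
  set D : Matrix (Fin n) (Fin n) ℂ := Matrix.diagonal (fun i => (μ i : ℂ)) with hD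
  set Dp : Matrix (Fin p) (Fin p) ℂ :=
    Matrix.diagonal (fun j : Fin p => (μ (Fin.castLE hpn.le j) : ℂ)) with hDp
  set η : Matrix (Fin n) (Fin p) ℂ := Uᴴ * ξ with hη
  set ζ : Matrix (Fin n) (Fin p) ℂ := ξ * W with hζ
  set Θ : Matrix (Fin n) (Fin p) ℂ := Uᴴ * Φ * W with hΘ
  -- basic facts
  have hΘorth : Θᴴ * Θ = 1 := by
    rw [hΘ]
    simp only [conjTranspose_mul, conjTranspose_conjTranspose, Matrix.mul_assoc]
    rw [← Matrix.mul_assoc U Uᴴ, hUU, Matrix.one_mul, ← Matrix.mul_assoc Φᴴ Φ, hΦ,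
      Matrix.one_mul, hW]
  have hcomm : D * Θ = Θ * Dp := by
    have h1 : U * D * Uᴴ * Φ = Φ * (W * Dp * Wᴴ) := by
      rw [← hdiag, heig, hAufbau]
    calc D * Θ = Uᴴ * (U * D * Uᴴ * Φ) * W := by
          rw [hΘ]
          simp only [Matrix.mul_assoc, ← Matrix.mul_assoc Uᴴ U, hU, Matrix.one_mul]
      _ = Uᴴ * (Φ * (W * Dp * Wᴴ)) * W := by rw [h1]
      _ = Uᴴ * (Φ * (W * (Dp * (Wᴴ * W)))) := by simp only [Matrix.mul_assoc]
      _ = Uᴴ * (Φ * (W * Dp)) := by rw [hW, Matrix.mul_one]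
      _ = Θ * Dp := by rw [hΘ]; simp only [Matrix.mul_assoc]
  have hΘentry : ∀ (i : Fin n) (j : Fin p), μ i ≠ μ (Fin.castLE hpn.le j) → Θ i j = 0 := by
    intro i j hne
    have h1 : (D * Θ) i j = (Θ * Dp) i j := by rw [hcomm]
    rw [hD, hDp, Matrix.diagonal_mul, Matrix.mul_diagonal] at h1
    have h2 : ((μ i : ℂ) - (μ (Fin.castLE hpn.le j) : ℂ)) * Θ i j = 0 := by
      ring_nf
      ring_nf at h1
      rw [h1]; ring
    rcases mul_eq_zero.mp h2 with h | h
    · exact absurd (by exact_mod_cast sub_eq_zero.mp h) hne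
    · exact h
  have hΘη : Θᴴ * η = 0 := by
    rw [hΘ, hη]
    simp only [conjTranspose_mul, conjTranspose_conjTranspose, Matrix.mul_assoc]
    rw [← Matrix.mul_assoc U Uᴴ, hUU, Matrix.one_mul, hξ, Matrix.mul_zero]
  -- index bookkeeping
  have hip : ∀ i : Fin n, μ i < t → (i : ℕ) < p := by
    intro i hi
    by_contra h
    have : (⟨p, hpn⟩ : Fin n) ≤ i := by
      simp only [Fin.le_def]; omega
    exact absurd (hmono this) (not_le.mpr hi)
  have hcastval : ∀ (i : Fin n) (h : (i : ℕ) < p), Fin.castLE hpn.le ⟨(i : ℕ), h⟩ = i :=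
    fun i h => Fin.ext rfl
  -- the subtype of "low" column indices
  let Ct := {j : Fin p // μ (Fin.castLE hpn.le j) < t}
  let e : {i : Fin n // μ i < t} ≃ Ct :=
    { toFun := fun x => ⟨⟨(x.1 : ℕ), hip x.1 x.2⟩, by rw [hcastval x.1 (hip x.1 x.2)]; exact x.2⟩
      invFun := fun a => ⟨Fin.castLE hpn.le a.1, a.2⟩
      left_inv := fun x => Subtype.ext (Fin.ext rfl)
      right_inv := fun a => Subtype.ext (Fin.ext rfl) }
  have hsum : ∀ f : Fin n → ℂ, (∀ i, ¬ μ i < t → f i = 0) →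
      ∑ i, f i = ∑ a : Ct, f (Fin.castLE hpn.le a.1) := by
    intro f hf
    rw [← Finset.sum_filter_of_ne (p := fun i => μ i < t)
      (fun x _ hx => by by_contra h; exact hx (hf x h)),
      Finset.sum_subtype (p := fun i => μ i < t) _ (fun x => by simp) f]
    exact Fintype.sum_equiv e _ _ (fun x => congrArg f (Fin.ext rfl))
  -- the square orthonormal submatrix
  let A : Matrix Ct Ct ℂ := fun a b => Θ (Fin.castLE hpn.le a.1) b.1
  let B : Matrix Ct (Fin p) ℂ := fun a k => η (Fin.castLE hpn.le a.1) k
  have hA : Aᴴ * A = 1 := by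
    ext a b
    have h1 := congrFun (congrFun hΘorth a.1) b.1
    simp only [Matrix.mul_apply, conjTranspose_apply] at h1 ⊢
    rw [hsum (fun i => star (Θ i a.1) * Θ i b.1) ?_] at h1
    · rw [h1]
      by_cases hab : a = b
      · subst hab; simp [Matrix.one_apply]
      · have hab' : ¬((a : Fin p) = (b : Fin p)) := fun h => hab (Subtype.ext h)
        simp [Matrix.one_apply, hab, hab']
    · intro i hi
      have hz : Θ i a.1 = 0 := hΘentry i a.1 (by
        have := a.2
        intro hEq
        rw [hEq] at hi
        exact hi this)
      simp [hz]
  have hAA : A * Aᴴ = 1 := mul_eq_one_comm.mp hA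
  have hB0 : Aᴴ * B = 0 := by
    ext a k
    have h1 := congrFun (congrFun hΘη a.1) k
    simp only [Matrix.mul_apply, conjTranspose_apply, Matrix.zero_apply] at h1 ⊢
    rw [hsum (fun i => star (Θ i a.1) * η i k) ?_] at h1
    · exact h1
    · intro i hi
      have hz : Θ i a.1 = 0 := hΘentry i a.1 (by
        have := a.2
        intro hEq
        rw [hEq] at hi
        exact hi this)
      simp [hz]
  have hB : B = 0 := by
    calc B = (A * Aᴴ) * B := by rw [hAA, Matrix.one_mul]
      _ = A * (Aᴴ * B) := by rw [Matrix.mul_assoc]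
      _ = 0 := by rw [hB0, Matrix.mul_zero]
  have hvan : ∀ (i : Fin n), μ i < t → ∀ k, η i k = 0 := by
    intro i hi k
    have h1 : (i : ℕ) < p := hip i hi
    have h2 : μ (Fin.castLE hpn.le ⟨(i : ℕ), h1⟩) < t := by rw [hcastval i h1]; exact hi
    have := congrFun (congrFun hB (⟨⟨(i : ℕ), h1⟩, h2⟩ : Ct)) k
    simpa [B, hcastval i h1] using this
    -- trace computations
  have hDη : ∀ (i : Fin n) (k : Fin p), (D * η) i k = (μ i : ℂ) * η i k :=
    fun i k => by rw [hD, Matrix.diagonal_mul]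
  have hζDp : ∀ (i : Fin n) (j : Fin p), (ζ * Dp) i j = ζ i j * (μ (Fin.castLE hpn.le j) : ℂ) :=
    fun i j => by rw [hDp, Matrix.mul_diagonal]
  set w : Fin n → ℝ := fun i => ∑ k, Complex.normSq (η i k) with hw
  set v : Fin p → ℝ := fun j => ∑ i, Complex.normSq (ζ i j) with hv
  have hHrw : ξᴴ * (H * ξ) = ηᴴ * (D * η) := by
    rw [hdiag, hη]
    simp only [conjTranspose_mul, conjTranspose_conjTranspose, Matrix.mul_assoc]
  have htr1 : ((ξᴴ * (H * ξ)).trace).re = ∑ i, μ i * w i := by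
    rw [hHrw, trace_conjT_mul]
    have : ∀ k ∈ Finset.univ, ∀ i ∈ Finset.univ,
        star (η i k) * ((D * η) i k) = ((μ i * Complex.normSq (η i k) : ℝ) : ℂ) := by
      intro k _ i _
      rw [hDη]; exact term_id _ _
    rw [Finset.sum_congr rfl (fun k hk => Finset.sum_congr rfl (this k hk))]
    rw [Finset.sum_comm, Complex.re_sum]
    refine Finset.sum_congr rfl fun i _ => ?_
    rw [Complex.re_sum]
    simp only [Complex.ofReal_re]
    rw [← Finset.mul_sum]
  have hΛrw : ξᴴ * (ξ * (Φᴴ * H * Φ)) = (ξᴴ * (ξ * (W * Dp))) * Wᴴ := by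
    rw [hAufbau]; simp only [Matrix.mul_assoc]
  have htr2m : (ξᴴ * (ξ * (Φᴴ * H * Φ))).trace = (ζᴴ * (ζ * Dp)).trace := by
    rw [hΛrw, Matrix.trace_mul_comm]
    congr 1
    rw [hζ]
    simp only [conjTranspose_mul, Matrix.mul_assoc]
  have htr2 : ((ξᴴ * (ξ * (Φᴴ * H * Φ))).trace).re
      = ∑ j, μ (Fin.castLE hpn.le j) * v j := by
    rw [htr2m, trace_conjT_mul]
    have : ∀ j ∈ Finset.univ, ∀ i ∈ Finset.univ,
        star (ζ i j) * ((ζ * Dp) i j)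
          = ((μ (Fin.castLE hpn.le j) * Complex.normSq (ζ i j) : ℝ) : ℂ) := by
      intro j _ i _
      rw [hζDp]; exact term_id' _ _
    rw [Finset.sum_congr rfl (fun j hj => Finset.sum_congr rfl (this j hj))]
    rw [Complex.re_sum]
    refine Finset.sum_congr rfl fun j _ => ?_
    rw [Complex.re_sum]
    simp only [Complex.ofReal_re]
    rw [← Finset.mul_sum]
  have hηη : ηᴴ * η = ξᴴ * ξ := by
    rw [hη]
    simp only [conjTranspose_mul, conjTranspose_conjTranspose, Matrix.mul_assoc]
    rw [← Matrix.mul_assoc U Uᴴ, hUU, Matrix.one_mul]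
  have htr3 : ((ξᴴ * ξ).trace).re = ∑ i, w i := by
    rw [← hηη, trace_conjT_mul]
    have : ∀ k ∈ Finset.univ, ∀ i ∈ Finset.univ,
        star (η i k) * η i k = ((Complex.normSq (η i k) : ℝ) : ℂ) := by
      intro k _ i _
      have := term_id 1 (η i k)
      simpa using this
    rw [Finset.sum_congr rfl (fun k hk => Finset.sum_congr rfl (this k hk))]
    rw [Finset.sum_comm, Complex.re_sum]
    refine Finset.sum_congr rfl fun i _ => ?_
    rw [Complex.re_sum]
    simp only [Complex.ofReal_re]
    rfl
  have hζζ : (ζᴴ * ζ).trace = (ξᴴ * ξ).trace := by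
    have h1 : ζᴴ * ζ = (Wᴴ * (ξᴴ * ξ)) * W := by
      rw [hζ]
      simp only [conjTranspose_mul, Matrix.mul_assoc]
    rw [h1, Matrix.trace_mul_comm, ← Matrix.mul_assoc W Wᴴ, hWW, Matrix.one_mul]
  have htr4 : ((ξᴴ * ξ).trace).re = ∑ j, v j := by
    rw [← hζζ, trace_conjT_mul]
    have : ∀ j ∈ Finset.univ, ∀ i ∈ Finset.univ,
        star (ζ i j) * ζ i j = ((Complex.normSq (ζ i j) : ℝ) : ℂ) := by
      intro j _ i _
      have := term_id 1 (ζ i j)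
      simpa using this
    rw [Finset.sum_congr rfl (fun j hj => Finset.sum_congr rfl (this j hj))]
    rw [Complex.re_sum]
    refine Finset.sum_congr rfl fun j _ => ?_
    rw [Complex.re_sum]
    simp only [Complex.ofReal_re]
    rfl
  -- inequalities
  have hwnn : ∀ i, 0 ≤ w i := fun i => Finset.sum_nonneg fun k _ => Complex.normSq_nonneg _
  have hvnn : ∀ j, 0 ≤ v j := fun j => Finset.sum_nonneg fun i _ => Complex.normSq_nonneg _
  have hwvan : ∀ i, μ i < t → w i = 0 := fun i hi =>
    Finset.sum_eq_zero fun k _ => by rw [hvan i hi k]; simp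
  have key1 : t * ∑ i, w i ≤ ∑ i, μ i * w i := by
    rw [Finset.mul_sum]
    apply Finset.sum_le_sum
    intro i _
    by_cases hi : μ i < t
    · rw [hwvan i hi]; simp
    · exact mul_le_mul_of_nonneg_right (not_lt.mp hi) (hwnn i)
  set q : Fin n := ⟨p - 1, Nat.lt_of_lt_of_le (Nat.sub_lt hp one_pos) hpn.le⟩ with hq
  have key2 : ∑ j, μ (Fin.castLE hpn.le j) * v j ≤ μ q * ∑ j, v j := by
    rw [Finset.mul_sum]
    apply Finset.sum_le_sum
    intro j _
    refine mul_le_mul_of_nonneg_right (hmono ?_) (hvnn j)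
    have := j.isLt
    simp only [hq, Fin.le_def, Fin.coe_castLE]
    omega
  -- conclusion
  have hsplit : ((ξᴴ * (H * ξ - ξ * (Φᴴ * H * Φ))).trace).re
      = (∑ i, μ i * w i) - ∑ j, μ (Fin.castLE hpn.le j) * v j := by
    rw [Matrix.mul_sub, Matrix.trace_sub, Complex.sub_re, htr1, htr2]
  rw [hsplit]
  have hT1 : t * ((ξᴴ * ξ).trace).re ≤ ∑ i, μ i * w i := by rw [htr3]; exact key1
  have hT2 : ∑ j, μ (Fin.castLE hpn.le j) * v j ≤ μ q * ((ξᴴ * ξ).trace).re := by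
    rw [htr4]; exact key2
  calc (t - μ q) * ((ξᴴ * ξ).trace).re
      = t * ((ξᴴ * ξ).trace).re - μ q * ((ξᴴ * ξ).trace).re := sub_mul _ _ _
    _ ≤ (∑ i, μ i * w i) - ∑ j, μ (Fin.castLE hpn.le j) * v j := sub_le_sub hT1 hT2
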